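/- For every k ∈ ℕ, there exists l ∈ ℕ such that any finite set A of k-tuples of elements of a countably infinite set (atoms), with |A| ≥ l, contains two distinct tuples α = (a₁,...,a_k) and β = (b₁,...,b_k) that are compatible: they have the same equality type (a_i = a_j ⟺ b_i = b_j for all i,j), and for every coordinate i, either a_i = b_i, or a_i ≠ b_i and a_i does not appear among b₁,...,b_k and b_i does not appear among a₁,...,a_k. -/
import Mathlib


/-- Two k-tuples of atoms are *compatible* if they have the same equality type,
and on every coordinate they either agree, or disagree with the disagreeing
atoms not appearing anywhere in the other tuple. -/
def Compatible {k : ℕ} (α β : Fin k → ℕ) : Prop :=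
  (∀ i j : Fin k, α i = α j ↔ β i = β j) ∧
  (∀ i : Fin k, α i = β i ∨
    (α i ≠ β i ∧ (∀ j : Fin k, α i ≠ β j) ∧ (∀ j : Fin k, β i ≠ α j)))

/-- Recursive bound used in the main lemma. -/
def Bnd (k : ℕ) : ℕ → ℕ
  | 0 => 1
  | s + 1 => k * k * Bnd k s + 1

/-- Main lemma: a family of tuples with the same equality type, no compatible
pair, all agreeing on a set `S` of coordinates with at most `s` coordinates
outside `S`, has cardinality at most `Bnd k s`. -/
lemma bnd_main (k : ℕ) (s : ℕ) :
    ∀ F : Finset (Fin k → ℕ),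
      (∀ α ∈ F, ∀ β ∈ F, ∀ i j : Fin k, α i = α j ↔ β i = β j) →
      (∀ α ∈ F, ∀ β ∈ F, α ≠ β → ¬ Compatible α β) →
      ∀ S : Finset (Fin k), (∀ α ∈ F, ∀ β ∈ F, ∀ i ∈ S, α i = β i) →
      Sᶜ.card ≤ s → F.card ≤ Bnd k s := by
  classical
  induction s with
  | zero =>
    intro F hT hC S hS hcard
    have hSc : Sᶜ = (∅ : Finset (Fin k)) :=
      Finset.card_eq_zero.mp (Nat.le_zero.mp hcard)
    have hSu : S = Finset.univ := by
      have := congrArg (·ᶜ) hSc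
      simpa using this
    have h1 : F.card ≤ 1 := by
      refine Finset.card_le_one.mpr ?_
      intro a ha b hb
      funext i
      exact hS a ha b hb i (hSu ▸ Finset.mem_univ i)
    simpa [Bnd] using h1
  | succ s ih =>
    intro F hT hC S hS hcard
    rcases Nat.eq_zero_or_pos k with hk0 | hk
    · -- k = 0 : all tuples are equal, so F has at most one element
      subst hk0
      have h1 : F.card ≤ 1 := by
        refine Finset.card_le_one.mpr ?_
        intro a ha b hb
        funext i
        exact absurd i.2 (by omega)
      calc F.card ≤ 1 := h1
        _ ≤ Bnd 0 (s + 1) := by simp [Bnd]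
    by_contra hbig
    push_neg at hbig
    -- hbig : Bnd k (s+1) < F.card
    have hBnd : k * k * Bnd k s + 1 < F.card := by
      simpa [Bnd] using hbig
    have hne : F.Nonempty := Finset.card_pos.mp (by omega)
    obtain ⟨α, hα⟩ := hne
    -- every other tuple β has a coordinate p ∉ S with β p = α q for some q
    have key : ∀ β ∈ F.erase α, ∃ pq : Fin k × Fin k,
        pq.1 ∉ S ∧ β pq.1 = α pq.2 := by
      intro β hβ
      have hβF : β ∈ F := Finset.mem_of_mem_erase hβ
      have hneq : β ≠ α := Finset.ne_of_mem_erase hβ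
      have hnc : ¬ Compatible α β := hC α hα β hβF (Ne.symm hneq)
      have hTab : ∀ i j : Fin k, α i = α j ↔ β i = β j := hT α hα β hβF
      rw [Compatible] at hnc
      push_neg at hnc
      obtain ⟨i, hi⟩ := hnc hTab
      obtain ⟨hi1, hi2⟩ := hi
      by_cases hj : ∃ j : Fin k, α i = β j
      · obtain ⟨j, hij⟩ := hj
        refine ⟨(j, i), ?_, hij.symm⟩
        intro hjS
        have hβα : β j = α j := hS β hβF α hα j hjS
        have : α i = α j := hij.trans hβα
        have : β i = β j := (hTab i j).mp this
        exact hi1 (this.trans hij.symm).symm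
      · push_neg at hj
        obtain ⟨j, hij⟩ := hi2 hi1 hj
        refine ⟨(i, j), ?_, hij⟩
        intro hiS
        exact hi1 (hS α hα β hβF i hiS)
    -- choice function selecting such a pair
    set f : (Fin k → ℕ) → Fin k × Fin k := fun β =>
      if h : ∃ pq : Fin k × Fin k, pq.1 ∉ S ∧ β pq.1 = α pq.2 then h.choose
      else (⟨0, hk⟩, ⟨0, hk⟩) with hf
    have hfprop : ∀ β ∈ F.erase α, (f β).1 ∉ S ∧ β (f β).1 = α (f β).2 := by
      intro β hβ
      have h := key β hβ
      simp only [hf, dif_pos h]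
      exact h.choose_spec
    -- pigeonhole on the pair (p, q)
    have hcard_erase : (F.erase α).card = F.card - 1 :=
      Finset.card_erase_of_mem hα
    have hmaps : ∀ a ∈ F.erase α, f a ∈ (Finset.univ : Finset (Fin k × Fin k)) :=
      fun a _ => Finset.mem_univ _
    have hlt : (Finset.univ : Finset (Fin k × Fin k)).card * Bnd k s
        < (F.erase α).card := by
      have : (Finset.univ : Finset (Fin k × Fin k)).card = k * k := by
        simp
      rw [this, hcard_erase]
      omega
    obtain ⟨pq, -, hfib⟩ :=
      Finset.exists_lt_card_fiber_of_mul_lt_card_of_maps_to hmaps hlt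
    set F₂ := (F.erase α).filter (fun β => f β = pq) with hF₂
    -- F₂ is nonempty, so pq.1 ∉ S and every β ∈ F₂ has β pq.1 = α pq.2
    have hF₂mem : ∀ β ∈ F₂, β ∈ F ∧ (f β = pq) ∧ pq.1 ∉ S ∧ β pq.1 = α pq.2 := by
      intro β hβ
      rw [hF₂, Finset.mem_filter] at hβ
      obtain ⟨hβe, hβf⟩ := hβ
      have hp := hfprop β hβe
      rw [hβf] at hp
      exact ⟨Finset.mem_of_mem_erase hβe, hβf, hp.1, hp.2⟩
    have hF₂ne : F₂.Nonempty := Finset.card_pos.mp (by omega)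
    obtain ⟨β₀, hβ₀⟩ := hF₂ne
    have hpS : pq.1 ∉ S := (hF₂mem β₀ hβ₀).2.2.1
    -- F₂ agrees on insert pq.1 S
    have hagree : ∀ β ∈ F₂, ∀ γ ∈ F₂, ∀ i ∈ insert pq.1 S, β i = γ i := by
      intro β hβ γ hγ i hi
      rcases Finset.mem_insert.mp hi with h | h
      · subst h
        exact (hF₂mem β hβ).2.2.2.trans (hF₂mem γ hγ).2.2.2.symm
      · exact hS β (hF₂mem β hβ).1 γ (hF₂mem γ hγ).1 i h
    have hcompl : (insert pq.1 S)ᶜ.card ≤ s := by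
      rw [Finset.compl_insert]
      have hpm : pq.1 ∈ Sᶜ := Finset.mem_compl.mpr hpS
      rw [Finset.card_erase_of_mem hpm]
      have : 1 ≤ Sᶜ.card := Finset.card_pos.mpr ⟨pq.1, hpm⟩
      omega
    have hF₂T : ∀ a ∈ F₂, ∀ b ∈ F₂, ∀ i j : Fin k, a i = a j ↔ b i = b j :=
      fun a ha b hb => hT a (hF₂mem a ha).1 b (hF₂mem b hb).1
    have hF₂C : ∀ a ∈ F₂, ∀ b ∈ F₂, a ≠ b → ¬ Compatible a b :=
      fun a ha b hb => hC a (hF₂mem a ha).1 b (hF₂mem b hb).1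
    have := ih F₂ hF₂T hF₂C (insert pq.1 S) hagree hcompl
    omega

/-- For every k there is l such that any finite set of k-tuples of atoms of
cardinality at least l contains two distinct compatible tuples. -/
theorem compatible_pair_of_large (k : ℕ) :
    ∃ l : ℕ, ∀ A : Finset (Fin k → ℕ), l ≤ A.card →
      ∃ α ∈ A, ∃ β ∈ A, α ≠ β ∧ Compatible α β := by
  classical
  refine ⟨2 ^ (k * k) * Bnd k k + 1, ?_⟩
  intro A hA
  by_contra h
  push_neg at h
  -- h : ∀ α ∈ A, ∀ β ∈ A, α ≠ β → ¬ Compatible α β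
  -- pigeonhole on equality types
  set t : (Fin k → ℕ) → (Fin k × Fin k → Bool) :=
    fun α p => decide (α p.1 = α p.2) with ht
  have hmaps : ∀ a ∈ A, t a ∈ (Finset.univ : Finset (Fin k × Fin k → Bool)) :=
    fun a _ => Finset.mem_univ _
  have hlt : (Finset.univ : Finset (Fin k × Fin k → Bool)).card * Bnd k k
      < A.card := by
    have : (Finset.univ : Finset (Fin k × Fin k → Bool)).card = 2 ^ (k * k) := by
      simp
    rw [this]
    omega
  obtain ⟨g, -, hfib⟩ :=
    Finset.exists_lt_card_fiber_of_mul_lt_card_of_maps_to hmaps hlt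
  set F := A.filter (fun α => t α = g) with hF
  have hFmem : ∀ a ∈ F, a ∈ A ∧ t a = g := by
    intro a ha
    rw [hF, Finset.mem_filter] at ha
    exact ha
  have hT : ∀ a ∈ F, ∀ b ∈ F, ∀ i j : Fin k, a i = a j ↔ b i = b j := by
    intro a ha b hb i j
    have h1 : t a = t b := (hFmem a ha).2.trans (hFmem b hb).2.symm
    have h2 := congrFun h1 (i, j)
    simp only [ht] at h2
    exact decide_eq_decide.mp h2
  have hC : ∀ a ∈ F, ∀ b ∈ F, a ≠ b → ¬ Compatible a b :=
    fun a ha b hb hab => h a (hFmem a ha).1 b (hFmem b hb).1 hab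
  have hagree : ∀ a ∈ F, ∀ b ∈ F, ∀ i ∈ (∅ : Finset (Fin k)), a i = b i := by
    intro a _ b _ i hi
    exact absurd hi (Finset.notMem_empty i)
  have hcompl : (∅ : Finset (Fin k))ᶜ.card ≤ k := by
    simp
  have := bnd_main k k F hT hC ∅ hagree hcompl
  omega
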